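/- Let f be the Carleson-Chang test function: f(t) = t/2 on [0,2], f(t) = sqrt(t-1) on [2, e^2+1], f(t) = e on [e^2+1, infinity). Then integral_0^infty exp(f(t)^2 - t) dt > 1 + e. -/

import Mathlib

open MeasureTheory Real Set intervalIntegral

theorem carleson_chang_test_function_integral (f : ℝ → ℝ)
    (h1 : ∀ t ∈ Set.Icc (0:ℝ) 2, f t = t / 2)
    (h2 : ∀ t ∈ Set.Icc (2:ℝ) (Real.exp 1 ^ 2 + 1), f t = Real.sqrt (t - 1))
    (h3 : ∀ t : ℝ, Real.exp 1 ^ 2 + 1 ≤ t → f t = Real.exp 1) :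
    (∫ t in Set.Ioi (0:ℝ), Real.exp ((f t) ^ 2 - t)) > 1 + Real.exp 1 := by
  set E := Real.exp 1 with hE
  have hE1 : (2:ℝ) ≤ E := by
    have := Real.add_one_le_exp (1:ℝ)
    linarith
  have hb2 : (2:ℝ) ≤ E ^ 2 + 1 := by nlinarith
  set b := E ^ 2 + 1 with hbdef
  set g : ℝ → ℝ := fun t => Real.exp ((f t) ^ 2 - t) with hg
  -- equalities on pieces
  have eq1 : EqOn g (fun t => Real.exp ((t/2) ^ 2 - t)) (Ioc 0 2) := by
    intro t ht
    simp only [hg]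
    rw [h1 t ⟨ht.1.le, ht.2⟩]
  have eq2 : EqOn g (fun _ => Real.exp (-1)) (Ioc 2 b) := by
    intro t ht
    simp only [hg]
    rw [h2 t ⟨ht.1.le, ht.2⟩, Real.sq_sqrt (by linarith [ht.1] : (0:ℝ) ≤ t - 1)]
    ring_nf
  have eq3 : EqOn g (fun t => Real.exp (E ^ 2 - t)) (Ioi b) := by
    intro t ht
    simp only [hg]
    rw [h3 t (le_of_lt ht)]
  -- integrability of explicit pieces
  have i1 : IntegrableOn (fun t => Real.exp ((t/2) ^ 2 - t)) (Ioc (0:ℝ) 2) :=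
    (Continuous.integrableOn_Ioc (by continuity))
  have i2 : IntegrableOn (fun _ : ℝ => Real.exp (-1)) (Ioc (2:ℝ) b) :=
    integrableOn_const measure_Ioc_lt_top.ne
  have i3 : IntegrableOn (fun t => Real.exp (E ^ 2 - t)) (Ioi b) := by
    have h : IntegrableOn (fun t => Real.exp (E ^ 2) * Real.exp (-1 * t)) (Ioi b) :=
      (exp_neg_integrableOn_Ioi b (by norm_num : (0:ℝ) < 1)).const_mul (Real.exp (E ^ 2))
    refine h.congr_fun (fun t _ => ?_) measurableSet_Ioi
    beta_reduce; rw [← Real.exp_add]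
    ring_nf
  have ig1 : IntegrableOn g (Ioc (0:ℝ) 2) :=
    i1.congr_fun (fun t ht => (eq1 ht).symm) measurableSet_Ioc
  have ig2 : IntegrableOn g (Ioc (2:ℝ) b) :=
    i2.congr_fun (fun t ht => (eq2 ht).symm) measurableSet_Ioc
  have ig3 : IntegrableOn g (Ioi b) :=
    i3.congr_fun (fun t ht => (eq3 ht).symm) measurableSet_Ioi
  -- splitting
  have hsplit : (∫ t in Ioi (0:ℝ), g t) =
      (∫ t in Ioc (0:ℝ) 2, g t) + (∫ t in Ioc (2:ℝ) b, g t) + (∫ t in Ioi b, g t) := by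
    have u1 : Ioc (0:ℝ) 2 ∪ Ioi 2 = Ioi 0 := Ioc_union_Ioi_eq_Ioi (by norm_num)
    have u2 : Ioc (2:ℝ) b ∪ Ioi b = Ioi 2 := Ioc_union_Ioi_eq_Ioi hb2
    rw [← u1, setIntegral_union (Ioc_disjoint_Ioi le_rfl) measurableSet_Ioi ig1 (by
      rw [← u2]; exact ig2.union ig3), ← u2,
      setIntegral_union (Ioc_disjoint_Ioi le_rfl) measurableSet_Ioi ig2 ig3, add_assoc]
  -- middle piece
  have hmid : (∫ t in Ioc (2:ℝ) b, g t) = (E ^ 2 - 1) * Real.exp (-1) := by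
    rw [setIntegral_congr_fun measurableSet_Ioc eq2, setIntegral_const, measureReal_def, Real.volume_Ioc,
      ENNReal.toReal_ofReal (by linarith), smul_eq_mul]
    rw [hbdef]; ring_nf
  -- tail piece
  have htail : (∫ t in Ioi b, g t) = Real.exp (-1) := by
    rw [setIntegral_congr_fun measurableSet_Ioi eq3]
    have : (∫ t in Ioi b, Real.exp (E ^ 2 - t)) =
        ∫ t in Ioi b, Real.exp (E ^ 2) * Real.exp (-t) := by
      congr 1 with t
      rw [← Real.exp_add]; ring_nf
    rw [this, MeasureTheory.integral_const_mul, integral_exp_neg_Ioi, ← Real.exp_add]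
    rw [hbdef]
    ring_nf
  -- first piece lower bound
  have hfirst : (83/30 : ℝ) * Real.exp (-1) ≤ ∫ t in Ioc (0:ℝ) 2, g t := by
    set P : ℝ → ℝ := fun t => Real.exp (-1) * (1 + (t/2 - 1) ^ 2 / 2) ^ 2 with hP
    have iP : IntegrableOn P (Ioc (0:ℝ) 2) := by
      have : Continuous P := by
        apply continuous_const.mul
        exact (continuous_const.add ((((continuous_id.div_const 2).sub continuous_const).pow 2).div_const 2)).pow 2
      exact this.integrableOn_Ioc
    have hle : ∀ t ∈ Ioc (0:ℝ) 2, P t ≤ g t := by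
      intro t ht
      rw [eq1 ht, hP]
      show Real.exp (-1) * (1 + (t/2 - 1) ^ 2 / 2) ^ 2 ≤ Real.exp ((t/2) ^ 2 - t)
      set x := (t/2 - 1) ^ 2 with hx
      have hx0 : 0 ≤ x := sq_nonneg _
      have key : (1 + x / 2) ^ 2 ≤ Real.exp x := by
        have h1 : x/2 + 1 ≤ Real.exp (x/2) := Real.add_one_le_exp _
        have h2 : (0:ℝ) ≤ x/2 + 1 := by linarith
        calc (1 + x/2) ^ 2 ≤ Real.exp (x/2) ^ 2 := by nlinarith
          _ = Real.exp x := by rw [sq, ← Real.exp_add]; ring_nf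
      have hexp : Real.exp ((t/2) ^ 2 - t) = Real.exp (-1) * Real.exp x := by
        rw [← Real.exp_add]; congr 1; rw [hx]; ring
      rw [hexp]
      exact mul_le_mul_of_nonneg_left key (Real.exp_pos _).le
    have hPint : (∫ t in Ioc (0:ℝ) 2, P t) = 83/30 * Real.exp (-1) := by
      have hIoc : (∫ t in Ioc (0:ℝ) 2, P t) = ∫ t in (0:ℝ)..2, P t :=
        (intervalIntegral.integral_of_le (by norm_num)).symm
      rw [hIoc]
      have hderiv : ∀ t ∈ uIcc (0:ℝ) 2,
          HasDerivAt (fun t => Real.exp (-1) *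
            (t + 2/3 * (t/2-1)^3 + 1/10 * (t/2-1)^5)) (P t) t := by
        intro t _
        have hs : HasDerivAt (fun t : ℝ => t/2 - 1) (1/2) t :=
          ((hasDerivAt_id t).div_const 2).sub_const 1
        have h3' := (hs.pow 3).const_mul (2/3 : ℝ)
        have h5' := (hs.pow 5).const_mul (1/10 : ℝ)
        have := (((hasDerivAt_id t).add h3').add h5').const_mul (Real.exp (-1))
        exact this.congr_deriv (by
        rw [hP]
        push_cast
        ring)
      have hcont : IntervalIntegrable P volume 0 2 :=
        by
        apply Continuous.intervalIntegrable
        apply continuous_const.mul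
        exact (continuous_const.add ((((continuous_id.div_const 2).sub continuous_const).pow 2).div_const 2)).pow 2
      rw [intervalIntegral.integral_eq_sub_of_hasDerivAt hderiv hcont]
      norm_num
      ring
    calc (83/30 : ℝ) * Real.exp (-1) = ∫ t in Ioc (0:ℝ) 2, P t := hPint.symm
      _ ≤ ∫ t in Ioc (0:ℝ) 2, g t := setIntegral_mono_on iP ig1 measurableSet_Ioc hle
  -- conclude
  have hEexp : Real.exp (-1) * E = 1 := by
    rw [hE, ← Real.exp_add]; norm_num
  have hE83 : E < 83/30 := by
    have := Real.exp_one_lt_d9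
    rw [← hE] at this
    linarith
  have hpos : (0:ℝ) < Real.exp (-1) := Real.exp_pos _
  have : (∫ t in Ioi (0:ℝ), g t) ≥ 83/30 * Real.exp (-1) + (E ^ 2 - 1) * Real.exp (-1)
      + Real.exp (-1) := by
    rw [hsplit, hmid, htail]
    linarith
  have hfin : 1 + E < 83/30 * Real.exp (-1) + (E ^ 2 - 1) * Real.exp (-1) + Real.exp (-1) := by
    nlinarith [hpos, hE83, hEexp]
  calc (1:ℝ) + E < _ := hfin
    _ ≤ ∫ t in Ioi (0:ℝ), g t := this
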